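/- Under the randomization assumption and with coarsened factor X̃ = c(X), the generalized null hypothesis H̃₀ is equivalent to the conditional independence Ỹ ⊥ X̃ | (h(X̃), Z), where Ỹ = Y is the observed outcome. -/
import Mathlib

open Finset

open Classical in
/-- Probability of an event `S` under the weight function `p` on a finite sample space. -/
noncomputable def Pr {Ω : Type*} [Fintype Ω] (p : Ω → ℝ) (S : Ω → Prop) : ℝ :=
  ∑ ω, if S ω then p ω else 0

lemma ite_inst {α : Sort*} {c : Prop} (i1 i2 : Decidable c) (a b : α) :
    @ite α c i1 a b = @ite α c i2 a b := by
  congr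

section Helpers
variable {Ω : Type*} [Fintype Ω] (p : Ω → ℝ)

lemma Pr_eq_sum (S : Ω → Prop) [inst : ∀ ω, Decidable (S ω)] :
    Pr p S = ∑ ω, if S ω then p ω else 0 :=
  Finset.sum_congr rfl fun ω _ => ite_inst _ _ _ _

lemma Pr_congr {S T : Ω → Prop} (hST : ∀ ω, S ω ↔ T ω) : Pr p S = Pr p T := by
  unfold Pr
  refine Finset.sum_congr rfl fun ω _ => ?_
  by_cases hS : S ω
  · rw [if_pos hS, if_pos ((hST ω).1 hS)]
  · rw [if_neg hS, if_neg (fun hT => hS ((hST ω).2 hT))]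

lemma Pr_nonneg (hp : ∀ ω, 0 ≤ p ω) (S : Ω → Prop) : 0 ≤ Pr p S := by
  unfold Pr
  refine Finset.sum_nonneg fun ω _ => ?_
  by_cases hS : S ω
  · rw [if_pos hS]; exact hp ω
  · rw [if_neg hS]

lemma Pr_zero {S : Ω → Prop} (hS : ∀ ω, ¬ S ω) : Pr p S = 0 := by
  unfold Pr
  exact Finset.sum_eq_zero fun ω _ => if_neg (hS ω)

lemma Pr_le_one (hp : ∀ ω, 0 ≤ p ω) (hp1 : ∑ ω, p ω = 1) (S : Ω → Prop) :
    Pr p S ≤ 1 := by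
  unfold Pr
  rw [← hp1]
  refine Finset.sum_le_sum fun ω _ => ?_
  by_cases hS : S ω
  · rw [if_pos hS]
  · rw [if_neg hS]; exact hp ω

lemma Pr_partition {𝒳 : Type*} [Fintype 𝒳] (X : Ω → 𝒳) (S : Ω → Prop) :
    Pr p S = ∑ x : 𝒳, Pr p (fun ω => S ω ∧ X ω = x) := by
  classical
  simp only [Pr_eq_sum]
  rw [Finset.sum_comm]
  refine Finset.sum_congr rfl fun ω _ => ?_
  by_cases hS : S ω
  · simp [hS, Finset.sum_ite_eq, Finset.sum_ite_eq']
  · simp [hS]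

end Helpers

lemma pr_ind {Ω 𝒳 𝒵 : Type*} [Fintype Ω] [Fintype 𝒳] [Fintype 𝒵]
    (p : Ω → ℝ) (X : Ω → 𝒳) (Z : Ω → 𝒵) (Y0 : 𝒳 → 𝒵 → Ω → ℝ)
    (hrand : ∀ (x : 𝒳) (z : 𝒵) (g : 𝒳 → 𝒵 → ℝ),
      Pr p (fun ω => X ω = x ∧ Z ω = z ∧ ∀ a b, Y0 a b ω = g a b)
        = Pr p (fun ω => X ω = x ∧ Z ω = z) * Pr p (fun ω => ∀ a b, Y0 a b ω = g a b))
    (x : 𝒳) (z : 𝒵) (t : ℝ) :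
    Pr p (fun ω => X ω = x ∧ Z ω = z ∧ Y0 x z ω = t)
      = Pr p (fun ω => X ω = x ∧ Z ω = z) * Pr p (fun ω => Y0 x z ω = t) := by
  classical
  set gf : Ω → 𝒳 → 𝒵 → ℝ := fun ω a b => Y0 a b ω with hgf
  set G' : Finset (𝒳 → 𝒵 → ℝ) :=
    (Finset.image gf Finset.univ).filter (fun g => g x z = t) with hG'
  have hmem : ∀ ω : Ω, gf ω ∈ G' ↔ Y0 x z ω = t := by
    intro ω
    simp [hG', Finset.mem_filter, Finset.mem_image, hgf]
  have hval : ∀ g ∈ G', g x z = t := fun g hg => (Finset.mem_filter.1 hg).2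
  have hiff : ∀ (ω : Ω) (g : 𝒳 → 𝒵 → ℝ), (∀ a b, Y0 a b ω = g a b) ↔ gf ω = g := by
    intro ω g
    constructor
    · intro hh; funext a b; exact hh a b
    · intro hh a b; exact congrFun (congrFun hh a) b
  have key1 : Pr p (fun ω => X ω = x ∧ Z ω = z ∧ Y0 x z ω = t)
      = ∑ g ∈ G', Pr p (fun ω => X ω = x ∧ Z ω = z ∧ ∀ a b, Y0 a b ω = g a b) := by
    simp only [Pr_eq_sum]
    rw [Finset.sum_comm]
    refine Finset.sum_congr rfl fun ω _ => ?_
    by_cases hxz : X ω = x ∧ Z ω = z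
    · obtain ⟨h1, h2⟩ := hxz
      by_cases ht : Y0 x z ω = t
      · simp [h1, h2, ht, hiff ω, Finset.sum_ite_eq, Finset.sum_ite_eq', (hmem ω).2 ht]
      · simp [h1, h2, ht, hiff ω, Finset.sum_ite_eq, Finset.sum_ite_eq', hmem ω]
    · have hfalse : ∀ C : Prop, ¬ (X ω = x ∧ Z ω = z ∧ C) :=
        fun C hc => hxz ⟨hc.1, hc.2.1⟩
      simp [hfalse]
  have key2 : Pr p (fun ω => Y0 x z ω = t)
      = ∑ g ∈ G', Pr p (fun ω => ∀ a b, Y0 a b ω = g a b) := by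
    simp only [Pr_eq_sum]
    rw [Finset.sum_comm]
    refine Finset.sum_congr rfl fun ω _ => ?_
    by_cases ht : Y0 x z ω = t
    · simp [ht, hiff ω, Finset.sum_ite_eq, Finset.sum_ite_eq', (hmem ω).2 ht]
    · simp [ht, hiff ω, Finset.sum_ite_eq, Finset.sum_ite_eq', hmem ω]
  rw [key1, key2, Finset.mul_sum]
  exact Finset.sum_congr rfl fun g _ => hrand x z g

lemma fiber_sum {𝒳 𝒳t : Type*} [Fintype 𝒳] [DecidableEq 𝒳t]
    (c : 𝒳 → 𝒳t) (w : 𝒳 → ℝ) (F : 𝒳t → ℝ)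
    (hF : ∀ xt, F xt = ∑ x : 𝒳, if c x = xt then w x else 0)
    (A : 𝒳t → Prop) [DecidablePred A] :
    ∑ x : 𝒳, (if A (c x) then w x else 0)
      = ∑ xt ∈ Finset.image c Finset.univ, (if A xt then F xt else 0) := by
  classical
  have step : ∀ xt : 𝒳t, (if A xt then F xt else 0)
      = ∑ x : 𝒳, if c x = xt ∧ A (c x) then w x else 0 := by
    intro xt
    by_cases hA : A xt
    · rw [if_pos hA, hF]
      refine Finset.sum_congr rfl fun x _ => ?_
      by_cases hc : c x = xt
      · rw [if_pos hc, if_pos ⟨hc, by rw [hc]; exact hA⟩]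
      · rw [if_neg hc, if_neg (by intro hh; exact hc hh.1)]
    · rw [if_neg hA]
      exact (Finset.sum_eq_zero fun x _ => if_neg (by intro hh; exact hA (hh.1 ▸ hh.2))).symm
  calc ∑ x : 𝒳, (if A (c x) then w x else 0)
      = ∑ x : 𝒳, ∑ xt ∈ Finset.image c Finset.univ,
          (if c x = xt ∧ A (c x) then w x else 0) := by
        refine Finset.sum_congr rfl fun x _ => ?_
        rw [Finset.sum_eq_single (f := fun xt => if c x = xt ∧ A (c x) then w x else 0) (c x)
          (fun b _ hb => if_neg (by intro hh; exact hb hh.1.symm))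
          (fun hmem => absurd (Finset.mem_image_of_mem c (Finset.mem_univ x)) hmem)]
        by_cases hA : A (c x)
        · rw [if_pos hA, if_pos ⟨rfl, hA⟩]
        · rw [if_neg hA, if_neg (by intro hh; exact hA hh.2)]
    _ = ∑ xt ∈ Finset.image c Finset.univ, ∑ x : 𝒳,
          (if c x = xt ∧ A (c x) then w x else 0) := Finset.sum_comm
    _ = ∑ xt ∈ Finset.image c Finset.univ, (if A xt then F xt else 0) :=
        Finset.sum_congr rfl fun xt _ => (step xt).symm

lemma div_split {a b d e : ℝ} (hd : d ≠ 0) (hkey : a * d = b * e) :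
    a / d = (b / d) * (e / d) := by
  rw [div_mul_div_comm, div_eq_div_iff hd (mul_ne_zero hd hd)]
  linear_combination d * hkey

lemma div_split_rev {a b d e : ℝ} (hd : d ≠ 0) (hc : a / d = (b / d) * (e / d)) :
    a * d = b * e := by
  rw [div_mul_div_comm, div_eq_div_iff hd (mul_ne_zero hd hd)] at hc
  exact mul_right_cancel₀ hd (show (a * d) * d = (b * e) * d by linear_combination hc)

theorem stmt11 {Ω 𝒳 𝒵 𝒳t 𝒳bar : Type*} [Fintype Ω] [Fintype 𝒳] [Fintype 𝒵]
    [DecidableEq 𝒳t]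
    (p : Ω → ℝ) (hp : ∀ ω, 0 ≤ p ω) (hp1 : ∑ ω, p ω = 1)
    (X : Ω → 𝒳) (Z : Ω → 𝒵) (Y0 : 𝒳 → 𝒵 → Ω → ℝ)
    (Y : Ω → ℝ) (hY : ∀ ω, Y ω = Y0 (X ω) (Z ω) ω)
    (c : 𝒳 → 𝒳t) (h : 𝒳t → 𝒳bar)
    -- randomization: (X,Z) is independent of the family of potential outcomes
    (hrand : ∀ (x : 𝒳) (z : 𝒵) (g : 𝒳 → 𝒵 → ℝ),
      Pr p (fun ω => X ω = x ∧ Z ω = z ∧ ∀ a b, Y0 a b ω = g a b)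
        = Pr p (fun ω => X ω = x ∧ Z ω = z) * Pr p (fun ω => ∀ a b, Y0 a b ω = g a b))
    -- total conditional weight of the fiber c⁻¹(xt) given Z = z (up to the factor P(Z=z))
    (denom : 𝒳t → 𝒵 → ℝ)
    (hdenom : ∀ xt z, denom xt z
      = ∑ x : 𝒳, if c x = xt then Pr p (fun ω => X ω = x ∧ Z ω = z) else 0)
    -- law of the marginalized potential outcome Ỹ(xt, z): mixture of the laws of the
    -- Y(x,z) over the fiber c⁻¹(xt), weighted proportionally to P(X = x | Z = z)
    (L : 𝒳t → 𝒵 → ℝ → ℝ)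
    (hL : ∀ xt z t, L xt z t
      = (∑ x : 𝒳, if c x = xt
          then Pr p (fun ω => X ω = x ∧ Z ω = z) * Pr p (fun ω => Y0 x z ω = t) else 0)
        / denom xt z) :
    -- generalized H̃₀ ↔ Ỹ ⊥ X̃ | (h(X̃), Z)
    ((∀ (xt xt' : 𝒳t) (z : 𝒵), h xt = h xt' →
        0 < denom xt z → 0 < denom xt' z →
        ∀ t : ℝ, L xt z t = L xt' z t)
      ↔ (∀ (t : ℝ) (xt : 𝒳t) (u : 𝒳bar) (z : 𝒵),
          0 < Pr p (fun ω => h (c (X ω)) = u ∧ Z ω = z) →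
          Pr p (fun ω => Y ω = t ∧ c (X ω) = xt ∧ h (c (X ω)) = u ∧ Z ω = z)
              / Pr p (fun ω => h (c (X ω)) = u ∧ Z ω = z)
            = (Pr p (fun ω => Y ω = t ∧ h (c (X ω)) = u ∧ Z ω = z)
                / Pr p (fun ω => h (c (X ω)) = u ∧ Z ω = z))
              * (Pr p (fun ω => c (X ω) = xt ∧ h (c (X ω)) = u ∧ Z ω = z)
                / Pr p (fun ω => h (c (X ω)) = u ∧ Z ω = z)))) := by
  classical
  have hQ0 : ∀ (x : 𝒳) (z : 𝒵), 0 ≤ Pr p (fun ω => X ω = x ∧ Z ω = z) :=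
    fun x z => Pr_nonneg p hp _
  have hR0 : ∀ (x : 𝒳) (z : 𝒵) (t : ℝ), 0 ≤ Pr p (fun ω => Y0 x z ω = t) :=
    fun x z t => Pr_nonneg p hp _
  have hR1 : ∀ (x : 𝒳) (z : 𝒵) (t : ℝ), Pr p (fun ω => Y0 x z ω = t) ≤ 1 :=
    fun x z t => Pr_le_one p hp hp1 _
  have hden0 : ∀ xt z, 0 ≤ denom xt z := by
    intro xt z
    rw [hdenom]
    refine Finset.sum_nonneg fun x _ => ?_
    by_cases hc : c x = xt
    · rw [if_pos hc]; exact hQ0 x z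
    · rw [if_neg hc]
  have hNm0 : ∀ (xt : 𝒳t) (z : 𝒵) (t : ℝ),
      0 ≤ ∑ x : 𝒳, if c x = xt
        then Pr p (fun ω => X ω = x ∧ Z ω = z) * Pr p (fun ω => Y0 x z ω = t) else 0 := by
    intro xt z t
    refine Finset.sum_nonneg fun x _ => ?_
    by_cases hc : c x = xt
    · rw [if_pos hc]; exact mul_nonneg (hQ0 x z) (hR0 x z t)
    · rw [if_neg hc]
  have hNm_le : ∀ (xt : 𝒳t) (z : 𝒵) (t : ℝ),
      (∑ x : 𝒳, if c x = xt
        then Pr p (fun ω => X ω = x ∧ Z ω = z) * Pr p (fun ω => Y0 x z ω = t) else 0)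
        ≤ denom xt z := by
    intro xt z t
    rw [hdenom]
    refine Finset.sum_le_sum fun x _ => ?_
    by_cases hc : c x = xt
    · rw [if_pos hc, if_pos hc]
      exact mul_le_of_le_one_right (hQ0 x z) (hR1 x z t)
    · rw [if_neg hc, if_neg hc]
  have hNm_zero : ∀ (xt : 𝒳t) (z : 𝒵) (t : ℝ), denom xt z = 0 →
      (∑ x : 𝒳, if c x = xt
        then Pr p (fun ω => X ω = x ∧ Z ω = z) * Pr p (fun ω => Y0 x z ω = t) else 0) = 0 :=
    fun xt z t h0 => le_antisymm (h0 ▸ hNm_le xt z t) (hNm0 xt z t)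
  have E1 : ∀ (t : ℝ) (xt : 𝒳t) (u : 𝒳bar) (z : 𝒵),
      Pr p (fun ω => Y ω = t ∧ c (X ω) = xt ∧ h (c (X ω)) = u ∧ Z ω = z)
        = if h xt = u then
            (∑ x : 𝒳, if c x = xt
              then Pr p (fun ω => X ω = x ∧ Z ω = z) * Pr p (fun ω => Y0 x z ω = t) else 0)
          else 0 := by
    intro t xt u z
    by_cases hu : h xt = u
    · rw [if_pos hu, Pr_partition p X]
      refine Finset.sum_congr rfl fun x _ => ?_
      by_cases hcx : c x = xt
      · rw [if_pos hcx, ← pr_ind p X Z Y0 hrand x z t]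
        refine Pr_congr p fun ω => ?_
        constructor
        · rintro ⟨⟨ht, -, -, hz⟩, hx⟩
          exact ⟨hx, hz, by rw [← hx, ← hz, ← hY]; exact ht⟩
        · rintro ⟨hx, hz, hy0⟩
          exact ⟨⟨by rw [hY, hx, hz]; exact hy0, by rw [hx]; exact hcx,
            by rw [hx, hcx]; exact hu, hz⟩, hx⟩
      · rw [if_neg hcx]
        refine Pr_zero p fun ω => ?_
        rintro ⟨⟨-, hc1, -, -⟩, hx⟩
        exact hcx (by rw [← hx]; exact hc1)
    · rw [if_neg hu]
      refine Pr_zero p fun ω => ?_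
      rintro ⟨-, hc1, hc2, -⟩
      exact hu (by rw [← hc1]; exact hc2)
  have E2 : ∀ (xt : 𝒳t) (u : 𝒳bar) (z : 𝒵),
      Pr p (fun ω => c (X ω) = xt ∧ h (c (X ω)) = u ∧ Z ω = z)
        = if h xt = u then denom xt z else 0 := by
    intro xt u z
    by_cases hu : h xt = u
    · rw [if_pos hu, Pr_partition p X, hdenom]
      refine Finset.sum_congr rfl fun x _ => ?_
      by_cases hcx : c x = xt
      · rw [if_pos hcx]
        refine Pr_congr p fun ω => ?_
        constructor
        · rintro ⟨⟨-, -, hz⟩, hx⟩; exact ⟨hx, hz⟩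
        · rintro ⟨hx, hz⟩
          exact ⟨⟨by rw [hx]; exact hcx, by rw [hx, hcx]; exact hu, hz⟩, hx⟩
      · rw [if_neg hcx]
        refine Pr_zero p fun ω => ?_
        rintro ⟨⟨hc1, -, -⟩, hx⟩
        exact hcx (by rw [← hx]; exact hc1)
    · rw [if_neg hu]
      refine Pr_zero p fun ω => ?_
      rintro ⟨hc1, hc2, -⟩
      exact hu (by rw [← hc1]; exact hc2)
  have E3 : ∀ (u : 𝒳bar) (z : 𝒵),
      Pr p (fun ω => h (c (X ω)) = u ∧ Z ω = z)
        = ∑ x : 𝒳, if h (c x) = u then Pr p (fun ω => X ω = x ∧ Z ω = z) else 0 := by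
    intro u z
    rw [Pr_partition p X]
    refine Finset.sum_congr rfl fun x _ => ?_
    by_cases hcx : h (c x) = u
    · rw [if_pos hcx]
      refine Pr_congr p fun ω => ?_
      constructor
      · rintro ⟨⟨-, hz⟩, hx⟩; exact ⟨hx, hz⟩
      · rintro ⟨hx, hz⟩; exact ⟨⟨by rw [hx]; exact hcx, hz⟩, hx⟩
    · rw [if_neg hcx]
      refine Pr_zero p fun ω => ?_
      rintro ⟨⟨hc1, -⟩, hx⟩
      exact hcx (by rw [← hx]; exact hc1)
  have E4 : ∀ (u : 𝒳bar) (z : 𝒵) (t : ℝ),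
      Pr p (fun ω => Y ω = t ∧ h (c (X ω)) = u ∧ Z ω = z)
        = ∑ x : 𝒳, if h (c x) = u
            then Pr p (fun ω => X ω = x ∧ Z ω = z) * Pr p (fun ω => Y0 x z ω = t) else 0 := by
    intro u z t
    rw [Pr_partition p X]
    refine Finset.sum_congr rfl fun x _ => ?_
    by_cases hcx : h (c x) = u
    · rw [if_pos hcx, ← pr_ind p X Z Y0 hrand x z t]
      refine Pr_congr p fun ω => ?_
      constructor
      · rintro ⟨⟨ht, -, hz⟩, hx⟩
        exact ⟨hx, hz, by rw [← hx, ← hz, ← hY]; exact ht⟩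
      · rintro ⟨hx, hz, hy0⟩
        exact ⟨⟨by rw [hY, hx, hz]; exact hy0, by rw [hx]; exact hcx, hz⟩, hx⟩
    · rw [if_neg hcx]
      refine Pr_zero p fun ω => ?_
      rintro ⟨⟨-, hc1, -⟩, hx⟩
      exact hcx (by rw [← hx]; exact hc1)
  have GD : ∀ (u : 𝒳bar) (z : 𝒵),
      (∑ x : 𝒳, if h (c x) = u then Pr p (fun ω => X ω = x ∧ Z ω = z) else 0)
        = ∑ xt' ∈ Finset.image c Finset.univ, if h xt' = u then denom xt' z else 0 :=
    fun u z => fiber_sum c _ (fun xt => denom xt z) (fun xt => hdenom xt z) (fun xt => h xt = u)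
  have GM : ∀ (u : 𝒳bar) (z : 𝒵) (t : ℝ),
      (∑ x : 𝒳, if h (c x) = u
          then Pr p (fun ω => X ω = x ∧ Z ω = z) * Pr p (fun ω => Y0 x z ω = t) else 0)
        = ∑ xt' ∈ Finset.image c Finset.univ,
            if h xt' = u then
              (∑ x : 𝒳, if c x = xt'
                then Pr p (fun ω => X ω = x ∧ Z ω = z) * Pr p (fun ω => Y0 x z ω = t) else 0)
            else 0 :=
    fun u z t => fiber_sum c _ _ (fun xt => rfl) (fun xt => h xt = u)
  constructor
  · -- H̃₀ → CI
    intro H0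
    have cross : ∀ (xt xt' : 𝒳t) (z : 𝒵) (t : ℝ), h xt' = h xt →
        (∑ x : 𝒳, if c x = xt'
          then Pr p (fun ω => X ω = x ∧ Z ω = z) * Pr p (fun ω => Y0 x z ω = t) else 0)
          * denom xt z
        = (∑ x : 𝒳, if c x = xt
            then Pr p (fun ω => X ω = x ∧ Z ω = z) * Pr p (fun ω => Y0 x z ω = t) else 0)
          * denom xt' z := by
      intro xt xt' z t hh'
      rcases eq_or_lt_of_le (hden0 xt' z) with h0' | hpos'
      · rw [← h0', mul_zero, hNm_zero xt' z t h0'.symm, zero_mul]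
      · rcases eq_or_lt_of_le (hden0 xt z) with h0 | hpos
        · rw [← h0, mul_zero, hNm_zero xt z t h0.symm, zero_mul]
        · have hLeq := H0 xt xt' z hh'.symm hpos hpos' t
          rw [hL, hL, div_eq_div_iff (ne_of_gt hpos) (ne_of_gt hpos')] at hLeq
          exact hLeq.symm
    intro t xt u z hD
    by_cases hu : h xt = u
    · rw [(E1 t xt u z).trans (if_pos hu), (E2 xt u z).trans (if_pos hu),
        (E3 u z).trans (GD u z), (E4 u z t).trans (GM u z t)]
      rw [(E3 u z).trans (GD u z)] at hD
      refine div_split (ne_of_gt hD) ?_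
      rw [Finset.mul_sum, Finset.sum_mul]
      refine Finset.sum_congr rfl fun xt' _ => ?_
      by_cases hhp : h xt' = u
      · rw [if_pos hhp, if_pos hhp]
        exact (cross xt xt' z t (hhp.trans hu.symm)).symm
      · rw [if_neg hhp, if_neg hhp, mul_zero, zero_mul]
    · rw [(E1 t xt u z).trans (if_neg hu), (E2 xt u z).trans (if_neg hu)]
      simp
  · -- CI → H̃₀
    intro CI xt xt' z hh hdxt hdxt' t
    rw [hL, hL]
    have hD_ge : denom xt z
        ≤ ∑ x : 𝒳, if h (c x) = h xt then Pr p (fun ω => X ω = x ∧ Z ω = z) else 0 := by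
      rw [hdenom]
      refine Finset.sum_le_sum fun x _ => ?_
      by_cases hc : c x = xt
      · rw [if_pos hc, if_pos (by rw [hc])]
      · rw [if_neg hc]
        by_cases hhc : h (c x) = h xt
        · rw [if_pos hhc]; exact hQ0 x z
        · rw [if_neg hhc]
    have hD : 0 < Pr p (fun ω => h (c (X ω)) = h xt ∧ Z ω = z) := by
      rw [E3 (h xt) z]
      exact lt_of_lt_of_le hdxt hD_ge
    have hDne : Pr p (fun ω => h (c (X ω)) = h xt ∧ Z ω = z) ≠ 0 := ne_of_gt hD
    have c1 := CI t xt (h xt) z hD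
    have c2 := CI t xt' (h xt) z hD
    rw [(E1 t xt (h xt) z).trans (if_pos rfl), (E2 xt (h xt) z).trans (if_pos rfl)] at c1
    rw [(E1 t xt' (h xt) z).trans (if_pos hh.symm),
      (E2 xt' (h xt) z).trans (if_pos hh.symm)] at c2
    have e1 := div_split_rev hDne c1
    have e2 := div_split_rev hDne c2
    rw [div_eq_div_iff (ne_of_gt hdxt) (ne_of_gt hdxt')]
    exact mul_left_cancel₀ hDne (by linear_combination denom xt' z * e1 - denom xt z * e2)
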